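/- Let A be a finite k-oriented digraph that is fine (has no proper refinement), and let B be a successor-closed subdigraph of A. Then B is fine. -/

import Mathlib

open scoped Classical

/-- A `k`-oriented digraph: loopless, asymmetric, all out-degrees at most `k`. -/
def IsKDigraph (k : ℕ) {V : Type*} [Fintype V] (S : V → V → Prop) : Prop :=
  (∀ a, ¬ S a a) ∧ (∀ a b, ¬ (S a b ∧ S b a)) ∧
    ∀ a : V, (Finset.univ.filter fun b => S a b).card ≤ k

/-- Two digraphs are orientations of the same underlying undirected graph. -/
def SameGraph {V : Type*} (S S' : V → V → Prop) : Prop :=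
  ∀ a b, (S a b ∨ S b a) ↔ (S' a b ∨ S' b a)

/-- `D` is successor-closed in `S`. -/
def SuccClosed {V : Type*} (S : V → V → Prop) (D : Set V) : Prop :=
  ∀ a ∈ D, ∀ b, S a b → b ∈ D

/-- `S'` is a refinement of `S`: a `k`-orientation of the same undirected graph in
which every successor-closed subset of `S` is again successor-closed. -/
def Refines (k : ℕ) {V : Type*} [Fintype V] (S' S : V → V → Prop) : Prop :=
  IsKDigraph k S' ∧ SameGraph S S' ∧ ∀ D : Set V, SuccClosed S D → SuccClosed S' D

/-- `S` is fine: it has no proper refinement (every refinement of `S` is refined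
back by `S`). -/
def Fine (k : ℕ) {V : Type*} [Fintype V] (S : V → V → Prop) : Prop :=
  IsKDigraph k S ∧ ∀ S' : V → V → Prop, Refines k S' S → Refines k S S'

/-- A successor-closed subdigraph of a fine `k`-oriented digraph is fine. -/
theorem succClosed_of_fine_is_fine (k : ℕ) (V : Type*) [Fintype V]
    (S : V → V → Prop) (hfine : Fine k S)
    (B : Finset V) (hB : SuccClosed S (↑B : Set V)) :
    Fine k (fun a b : {x // x ∈ B} => S a b) := by
  obtain ⟨⟨hirr, hasym, hdeg⟩, hSfine⟩ := hfine
  have hTk : IsKDigraph k (fun a b : {x // x ∈ B} => S a b) := by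
    refine ⟨fun a => hirr a, fun a b => hasym a b, fun a => ?_⟩
    refine le_trans ?_ (hdeg (a : V))
    refine Finset.card_le_card_of_injOn Subtype.val ?_ ?_
    · intro b hb
      simp only [Finset.mem_coe, Finset.mem_filter, Finset.mem_univ, true_and] at hb ⊢
      exact hb
    · intro x _ y _ h
      exact Subtype.ext h
  refine ⟨hTk, ?_⟩
  intro T' hT'
  obtain ⟨⟨hirr', hasym', hdeg'⟩, hsg', hsc'⟩ := hT'
  classical
  set S' : V → V → Prop := fun a b =>
    if h : a ∈ B ∧ b ∈ B then T' ⟨a, h.1⟩ ⟨b, h.2⟩ else S a b with hS'def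
  have hS'in : ∀ a b (ha : a ∈ B) (hb : b ∈ B), S' a b ↔ T' ⟨a, ha⟩ ⟨b, hb⟩ := by
    intro a b ha hb
    simp only [hS'def, dif_pos (⟨ha, hb⟩ : a ∈ B ∧ b ∈ B)]
  have hS'out : ∀ a b, ¬ (a ∈ B ∧ b ∈ B) → (S' a b ↔ S a b) := by
    intro a b h
    simp only [hS'def, dif_neg h]
  -- edges of S' starting in B stay in B
  have hS'B : ∀ a b, a ∈ B → S' a b → b ∈ B := by
    intro a b ha hab
    by_contra hb
    rw [hS'out a b (fun h => hb h.2)] at hab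
    exact hb (hB a ha b hab)
  -- S' is a k-digraph
  have hS'k : IsKDigraph k S' := by
    refine ⟨?_, ?_, ?_⟩
    · intro a h
      by_cases ha : a ∈ B ∧ a ∈ B
      · rw [hS'in a a ha.1 ha.2] at h; exact hirr' _ h
      · rw [hS'out a a ha] at h; exact hirr a h
    · intro a b h
      by_cases hab : a ∈ B ∧ b ∈ B
      · rw [hS'in a b hab.1 hab.2, hS'in b a hab.2 hab.1] at h
        exact hasym' _ _ h
      · rw [hS'out a b hab, hS'out b a (fun h' => hab ⟨h'.2, h'.1⟩)] at h
        exact hasym a b h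
    · intro a
      by_cases ha : a ∈ B
      · refine le_trans ?_ (hdeg' ⟨a, ha⟩)
        refine Finset.card_le_card_of_surjOn Subtype.val ?_
        intro b hb
        simp only [Finset.coe_filter, Finset.mem_univ, true_and, Set.mem_setOf_eq,
          Set.mem_image] at hb ⊢
        have hbB : b ∈ B := hS'B a b ha hb
        exact ⟨⟨b, hbB⟩, (hS'in a b ha hbB).mp hb, rfl⟩
      · refine le_trans (Finset.card_le_card ?_) (hdeg a)
        intro b hb
        simp only [Finset.mem_filter, Finset.mem_univ, true_and] at hb ⊢
        exact (hS'out a b (fun h => ha h.1)).mp hb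
  -- S' has the same underlying graph as S
  have hS'sg : SameGraph S S' := by
    intro a b
    by_cases hab : a ∈ B ∧ b ∈ B
    · rw [hS'in a b hab.1 hab.2, hS'in b a hab.2 hab.1]
      exact hsg' ⟨a, hab.1⟩ ⟨b, hab.2⟩
    · rw [hS'out a b hab, hS'out b a (fun h' => hab ⟨h'.2, h'.1⟩)]
  -- succ-closed sets of S are succ-closed in S'
  have hS'sc : ∀ D : Set V, SuccClosed S D → SuccClosed S' D := by
    intro D hD a ha b hab
    by_cases h : a ∈ B ∧ b ∈ B
    · rw [hS'in a b h.1 h.2] at hab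
      have hD' : SuccClosed (fun a b : {x // x ∈ B} => S a b)
          {x : {x // x ∈ B} | (x : V) ∈ D} := by
        intro x hx y hxy
        exact hD x hx y hxy
      exact hsc' _ hD' ⟨a, h.1⟩ ha ⟨b, h.2⟩ hab
    · rw [hS'out a b h] at hab
      exact hD a ha b hab
  have hBack : Refines k S S' := hSfine S' ⟨hS'k, hS'sg, hS'sc⟩
  obtain ⟨_, hbsg, hbsc⟩ := hBack
  refine ⟨hTk, ?_, ?_⟩
  · -- SameGraph T' T
    intro x y
    have := hbsg (x : V) (y : V)
    rw [hS'in x y x.2 y.2, hS'in y x y.2 x.2] at this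
    simpa using this
  · -- succ-closed sets of T' are succ-closed in T
    intro D hD
    set Dh : Set V := {v | ∃ h : v ∈ B, (⟨v, h⟩ : {x // x ∈ B}) ∈ D} with hDh
    have hDhsc : SuccClosed S' Dh := by
      rintro a ⟨ha, haD⟩ b hab
      have hbB : b ∈ B := hS'B a b ha hab
      rw [hS'in a b ha hbB] at hab
      exact ⟨hbB, hD _ haD _ hab⟩
    have hDhS : SuccClosed S Dh := hbsc Dh hDhsc
    intro x hx y hxy
    have : (y : V) ∈ Dh := hDhS (x : V) ⟨x.2, by simpa using hx⟩ (y : V) hxy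
    obtain ⟨h, hmem⟩ := this
    simpa using hmem
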